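/- As formal power series over ℤ, (∏_{k≥1} 1/(1-t^k)) · ∏_{k≥1}(1+t^{2k}) = (∏_{k≥1} 1/(1-t^k)) · (∏_{k≥1} 1/(1-t^{4k})) · ∑_{k≥0} t^{k(k+1)}. -/

import Mathlib

open PowerSeries Finset

/-- The geometric series `1/(1-t^k)` as a formal power series over `ℤ`,
realized as the inverse of the unit `1 - t^k`. -/
noncomputable def geom (k : ℕ) : PowerSeries ℤ :=
  PowerSeries.invOfUnit (1 - PowerSeries.X ^ k) 1

local notation "Xz" => (PowerSeries.X : PowerSeries ℤ)

noncomputable def dd : ℕ → ℕ → PowerSeries ℤ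
  | 0, 0 => 1
  | 0, _+1 => 0
  | m+1, 0 => dd m 0
  | m+1, k+1 => dd m (k+1) + PowerSeries.X ^ (2*(m-k)) * dd m k

lemma dd_zero : ∀ m k, m < k → dd m k = 0 := by
  intro m
  induction m with
  | zero => intro k hk; match k, hk with | k+1, _ => rfl
  | succ m ih =>
    intro k hk
    match k, hk with
    | k+1, hk =>
      show dd m (k+1) + PowerSeries.X ^ (2*(m-k)) * dd m k = 0
      rw [ih (k+1) (by omega), ih k (by omega), mul_zero, add_zero]

lemma dd_diag : ∀ m, dd m 0 = 1 := by
  intro m; induction m with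
  | zero => rfl
  | succ m ih => show dd m 0 = 1; exact ih


lemma keyA (n : ℕ) : ∀ m : ℕ,
    ∏ j ∈ range m, ((PowerSeries.X : PowerSeries ℤ) ^ (2*n) + PowerSeries.X ^ (2*j+2)) =
    ∑ k ∈ range (m+1), dd m k * PowerSeries.X ^ (k^2 + k + 2*n*(m-k)) := by
  intro m
  induction m with
  | zero => simp [dd]
  | succ m ih =>
    rw [prod_range_succ, ih]
    -- RHS of goal: split off k = 0 and use recursion
    rw [Finset.sum_range_succ' (fun k => dd (m+1) k * PowerSeries.X ^ (k^2 + k + 2*n*(m+1-k)))]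
    have hrec : ∀ k, dd (m+1) (k+1) = dd m (k+1) + PowerSeries.X ^ (2*(m-k)) * dd m k :=
      fun k => rfl
    have h0 : dd (m+1) 0 = dd m 0 := rfl
    simp only [hrec, h0, add_mul]
    rw [Finset.sum_add_distrib]
    have e1 : (∑ k ∈ range (m+1), dd m (k+1) * PowerSeries.X ^ ((k+1)^2 + (k+1) + 2*n*(m+1-(k+1)))) +
        dd m 0 * PowerSeries.X ^ (0^2 + 0 + 2*n*(m+1-0)) =
        PowerSeries.X ^ (2*n) * ∑ k ∈ range (m+1), dd m k * PowerSeries.X ^ (k^2 + k + 2*n*(m-k)) := by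
      rw [← Finset.sum_range_succ' (fun k => dd m k * PowerSeries.X ^ (k^2 + k + 2*n*(m+1-k)))]
      rw [Finset.sum_range_succ, dd_zero m (m+1) (by omega), zero_mul, add_zero,
        Finset.mul_sum]
      refine Finset.sum_congr rfl fun k hk => ?_
      have hk' : k ≤ m := by simpa using Nat.lt_succ_iff.mp (mem_range.mp hk)
      have : k^2 + k + 2*n*(m+1-k) = 2*n + (k^2 + k + 2*n*(m-k)) := by
        zify [hk', Nat.le_succ_of_le hk']; ring
      rw [this, pow_add]; ring
    have e2 : (∑ k ∈ range (m+1),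
        PowerSeries.X ^ (2*(m-k)) * dd m k * PowerSeries.X ^ ((k+1)^2 + (k+1) + 2*n*(m+1-(k+1)))) =
        PowerSeries.X ^ (2*m+2) * ∑ k ∈ range (m+1), dd m k * PowerSeries.X ^ (k^2 + k + 2*n*(m-k)) := by
      rw [Finset.mul_sum]
      refine Finset.sum_congr rfl fun k hk => ?_
      have hk' : k ≤ m := by simpa using Nat.lt_succ_iff.mp (mem_range.mp hk)
      have h1 : m + 1 - (k+1) = m - k := by omega
      rw [h1]
      have : 2*(m-k) + ((k+1)^2 + (k+1) + 2*n*(m-k)) = (2*m+2) + (k^2 + k + 2*n*(m-k)) := by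
        zify [hk']; ring
      calc PowerSeries.X ^ (2*(m-k)) * dd m k * PowerSeries.X ^ ((k+1)^2 + (k+1) + 2*n*(m-k))
          = dd m k * PowerSeries.X ^ (2*(m-k) + ((k+1)^2 + (k+1) + 2*n*(m-k))) := by
            rw [pow_add]; ring
        _ = dd m k * PowerSeries.X ^ ((2*m+2) + (k^2 + k + 2*n*(m-k))) := by rw [this]
        _ = PowerSeries.X ^ (2*m+2) * (dd m k * PowerSeries.X ^ (k^2 + k + 2*n*(m-k))) := by
            rw [pow_add]; ring
    rw [e2]
    linear_combination -e1

lemma keyB : ∀ m k, k ≤ m+1 →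
    dd m k * ∏ j ∈ range k, (1 - (PowerSeries.X : PowerSeries ℤ)^(2*(j+1))) =
    ∏ j ∈ range k, (1 - (PowerSeries.X : PowerSeries ℤ)^(2*(m+j+1-k))) := by
  intro m
  induction m with
  | zero =>
    intro k hk
    interval_cases k
    · simp [dd]
    · show dd 0 1 * _ = _
      have : dd 0 1 = 0 := rfl
      rw [this, zero_mul]
      rw [Finset.prod_range_one]
      norm_num
  | succ m ih =>
    intro k hk
    match k with
    | 0 => simp [dd_diag]
    | k+1 =>
      by_cases hkm : k ≤ m
      · -- main case
        have hrec : dd (m+1) (k+1) = dd m (k+1) + PowerSeries.X ^ (2*(m-k)) * dd m k := rfl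
        have ih1 := ih (k+1) (by omega)
        have ih2 := ih k (by omega)
        set W : PowerSeries ℤ := ∏ j ∈ range k, (1 - PowerSeries.X^(2*(m+j+1-k))) with hW
        -- rewrite ih1's RHS as (1 - X^(2*(m-k))) * W
        have ih1' : dd m (k+1) * ∏ j ∈ range (k+1), (1 - (PowerSeries.X : PowerSeries ℤ)^(2*(j+1)))
            = (1 - PowerSeries.X^(2*(m-k))) * W := by
          rw [ih1, Finset.prod_range_succ' (fun j => (1 - (PowerSeries.X:PowerSeries ℤ)^(2*(m+j+1-(k+1)))))]
          rw [hW]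
          have h0 : 2*(m+0+1-(k+1)) = 2*(m-k) := by omega
          rw [h0, mul_comm]
          congr 1
          refine Finset.prod_congr rfl fun j hj => ?_
          congr 2
          omega
        have hQ : (∏ j ∈ range (k+1), (1 - (PowerSeries.X : PowerSeries ℤ)^(2*(j+1)))) =
            (∏ j ∈ range k, (1 - (PowerSeries.X : PowerSeries ℤ)^(2*(j+1)))) * (1 - PowerSeries.X^(2*(k+1))) :=
          Finset.prod_range_succ _ _
        have target : (∏ j ∈ range (k+1), (1 - (PowerSeries.X:PowerSeries ℤ)^(2*(m+1+j+1-(k+1))))) =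
            W * (1 - PowerSeries.X^(2*(m+1))) := by
          rw [Finset.prod_range_succ]
          have hlast : 2*(m+1+k+1-(k+1)) = 2*(m+1) := by omega
          rw [hlast, hW]
          congr 1
          refine Finset.prod_congr rfl fun j hj => ?_
          congr 2
          omega
        rw [target, hrec, add_mul, ih1', hQ, ← mul_assoc, mul_assoc (PowerSeries.X ^ (2*(m-k))), ih2]
        have hexp : (PowerSeries.X : PowerSeries ℤ)^(2*(m-k)) * PowerSeries.X^(2*(k+1)) =
            PowerSeries.X^(2*(m+1)) := by
          rw [← pow_add]; congr 1; omega
        linear_combination (-W) * hexp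
      · -- k = m+1
        have hk1 : k = m+1 := by omega
        subst hk1
        have hrec : dd (m+1) (m+2) = dd m (m+2) + PowerSeries.X ^ (2*(m-(m+1))) * dd m (m+1) := rfl
        rw [hrec, dd_zero m (m+2) (by omega), dd_zero m (m+1) (by omega), mul_zero, add_zero, zero_mul]
        symm
        apply Finset.prod_eq_zero (Finset.mem_range.mpr (show 0 < m+2 by omega))
        have : 2*(m+1+0+1-(m+2)) = 0 := by omega
        rw [this, pow_zero]
        ring



lemma H2 {L : ℕ} {a b : PowerSeries ℤ} (ha : (PowerSeries.X:PowerSeries ℤ)^L ∣ a - 1)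
    (hb : (PowerSeries.X:PowerSeries ℤ)^L ∣ b - 1) :
    (PowerSeries.X:PowerSeries ℤ)^L ∣ a * b - 1 := by
  have : a * b - 1 = a * (b - 1) + (a - 1) := by ring
  rw [this]
  exact dvd_add (Dvd.dvd.mul_left hb a) ha

lemma H1 {L : ℕ} {ι : Type*} (s : Finset ι) (f : ι → PowerSeries ℤ)
    (h : ∀ i ∈ s, (PowerSeries.X:PowerSeries ℤ)^L ∣ f i - 1) :
    (PowerSeries.X:PowerSeries ℤ)^L ∣ (∏ i ∈ s, f i) - 1 := by
  induction s using Finset.cons_induction with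
  | empty => simp
  | cons i s his ih =>
    rw [Finset.prod_cons]
    exact H2 (h i (Finset.mem_cons_self i s)) (ih fun j hj => h j (Finset.mem_cons.mpr (Or.inr hj)))

lemma Hfac {L e : ℕ} (h : L ≤ e) (c : ℤ) :
    (PowerSeries.X:PowerSeries ℤ)^L ∣ (1 + (PowerSeries.C c) * PowerSeries.X^e) - 1 := by
  have : (1 + (PowerSeries.C c) * PowerSeries.X^e) - 1 = (PowerSeries.C c) * PowerSeries.X^e := by ring
  rw [this]
  exact Dvd.dvd.mul_left (pow_dvd_pow _ h) _

lemma Hsub {L e : ℕ} (h : L ≤ e) :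
    (PowerSeries.X:PowerSeries ℤ)^L ∣ (1 - PowerSeries.X^e : PowerSeries ℤ) - 1 := by
  have : (1 - PowerSeries.X^e : PowerSeries ℤ) - 1 = -(PowerSeries.X^e) := by ring
  rw [this]
  exact Dvd.dvd.neg_right (pow_dvd_pow _ h)

lemma Hadd {L e : ℕ} (h : L ≤ e) :
    (PowerSeries.X:PowerSeries ℤ)^L ∣ (1 + PowerSeries.X^e : PowerSeries ℤ) - 1 := by
  have : (1 + PowerSeries.X^e : PowerSeries ℤ) - 1 = PowerSeries.X^e := by ring
  rw [this]
  exact pow_dvd_pow _ h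

lemma sum_aux : ∀ N : ℕ, ∑ j ∈ range N, (2*j+2) = N^2 + N := by
  intro N
  induction N with
  | zero => simp
  | succ N ih => rw [Finset.sum_range_succ, ih]; ring

lemma LHSfact (N : ℕ) :
    ∏ j ∈ range (2*N), ((PowerSeries.X:PowerSeries ℤ)^(2*N) + PowerSeries.X^(2*j+2)) =
    PowerSeries.X^(3*N^2+N) * (∏ j ∈ range N, (1 + (PowerSeries.X:PowerSeries ℤ)^(2*j)))
      * ∏ j ∈ range N, (1 + (PowerSeries.X:PowerSeries ℤ)^(2*j+2)) := by
  have h2N : 2*N = N + N := by omega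
  rw [h2N, Finset.prod_range_add]
  have p1 : ∏ j ∈ range N, ((PowerSeries.X:PowerSeries ℤ)^(N+N) + PowerSeries.X^(2*j+2)) =
      PowerSeries.X^(N^2+N) * ∏ j ∈ range N, (1 + (PowerSeries.X:PowerSeries ℤ)^(2*j)) := by
    have step : ∀ j ∈ range N, ((PowerSeries.X:PowerSeries ℤ)^(N+N) + PowerSeries.X^(2*j+2)) =
        PowerSeries.X^(2*j+2) * (1 + PowerSeries.X^(2*(N-1-j))) := by
      intro j hj
      have hj' : j < N := Finset.mem_range.mp hj
      have : N+N = (2*j+2) + 2*(N-1-j) := by omega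
      rw [this, pow_add]; ring
    rw [Finset.prod_congr rfl step, Finset.prod_mul_distrib, Finset.prod_pow_eq_pow_sum, sum_aux]
    congr 1
    rw [← Finset.prod_range_reflect (fun j => (1 + (PowerSeries.X:PowerSeries ℤ)^(2*j))) N]
  have p2 : ∏ j ∈ range N, ((PowerSeries.X:PowerSeries ℤ)^(N+N) + PowerSeries.X^(2*(N+j)+2)) =
      PowerSeries.X^(2*N^2) * ∏ j ∈ range N, (1 + (PowerSeries.X:PowerSeries ℤ)^(2*j+2)) := by
    have step : ∀ j ∈ range N, ((PowerSeries.X:PowerSeries ℤ)^(N+N) + PowerSeries.X^(2*(N+j)+2)) =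
        PowerSeries.X^(N+N) * (1 + PowerSeries.X^(2*j+2)) := by
      intro j hj
      have : 2*(N+j)+2 = (N+N) + (2*j+2) := by omega
      rw [this, pow_add]; ring
    rw [Finset.prod_congr rfl step, Finset.prod_mul_distrib, Finset.prod_const,
      Finset.card_range, ← pow_mul]
    congr 2
    ring
  rw [p1, p2]
  have : 3*N^2+N = (N^2+N) + 2*N^2 := by ring
  rw [this, pow_add]
  ring

lemma core (n : ℕ) : Xz^(n+1) ∣
    (∏ k ∈ range (n+1), (1 + Xz^(2*(k+1)))) * (∏ k ∈ range (n+1), (1 - Xz^(4*(k+1))))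
      - ∑ k ∈ range (n+1), Xz^(k*(k+1)) := by
  set N := n + 1 with hNdef
  have hN : 1 ≤ N := Nat.le_add_left 1 n
  set PP : PowerSeries ℤ := ∏ k ∈ range N, (1 + Xz^(2*(k+1))) with hPP
  set DD : PowerSeries ℤ := ∏ k ∈ range N, (1 - Xz^(4*(k+1))) with hDD
  set SS : PowerSeries ℤ := ∑ k ∈ range N, Xz^(k*(k+1)) with hSS
  set QN : PowerSeries ℤ := ∏ j ∈ range N, (1 - Xz^(2*(j+1))) with hQN
  set Wv : PowerSeries ℤ := ∏ j ∈ range N, (1 - Xz^(2*(N+j+1))) with hWv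
  set Q2 : PowerSeries ℤ := ∏ j ∈ range (2*N), (1 - Xz^(2*(j+1))) with hQ2
  set E : ℕ := 3*N^2+N with hE
  set B : ℕ := 3*N^2+2*N with hB
  set F : ℕ → PowerSeries ℤ :=
    fun k => (dd (2*N) k * Xz^(k^2+k+2*N*(2*N-k))) * ((1+Xz^(2*N)) * Q2) with hF
  set g : ℕ → PowerSeries ℤ := fun m => Xz^(E+m*(m+1)) * Wv with hg
  -- main exact identity
  have Hmain : Xz^E * ((PP * DD) * (2*Wv)) = ∑ k ∈ range (2*N+1), F k := by
    have h1 := keyA N (2*N)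
    rw [LHSfact N] at h1
    have e4 : (∏ j ∈ range N, (1 + Xz^(2*j+2))) = PP := by
      rw [hPP]
      exact Finset.prod_congr rfl fun j _ => by rw [show 2*j+2 = 2*(j+1) from by omega]
    have eA : (∏ j ∈ range N, (1 + Xz^(2*j))) * (1 + Xz^(2*N)) = 2 * PP := by
      have e3 : ∏ j ∈ range (N+1), (1 + Xz^(2*j)) =
          (∏ j ∈ range N, (1 + Xz^(2*j))) * (1 + Xz^(2*N)) := Finset.prod_range_succ _ _
      have e3' : ∏ j ∈ range (N+1), (1 + Xz^(2*j)) = PP * (1 + Xz^(2*0)) :=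
        Finset.prod_range_succ' (fun j => (1 + Xz^(2*j))) N
      rw [← e3, e3']
      norm_num [mul_comm]
    have eD : PP * QN = DD := by
      rw [hPP, hQN, hDD, ← Finset.prod_mul_distrib]
      refine Finset.prod_congr rfl fun k _ => ?_
      have h4 : 4*(k+1) = 2*(k+1) + 2*(k+1) := by omega
      rw [h4, pow_add]; ring
    have eQ : Q2 = QN * Wv := by
      rw [hQ2, show 2*N = N + N from by omega, Finset.prod_range_add, hQN, hWv]
    rw [e4] at h1
    have step1 : Xz^E * (PP * DD * (2*Wv)) =
        (Xz^(3*N^2+N) * (∏ j ∈ range N, (1 + Xz^(2*j))) * PP) * ((1+Xz^(2*N)) * Q2) := by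
      rw [eQ, hE]
      linear_combination (-(Xz^(3*N^2+N)) * PP * QN * Wv) * eA +
        (-(Xz^(3*N^2+N)) * 2 * PP * Wv) * eD
    rw [step1, h1, Finset.sum_mul]
  -- expansion of the subtracted term
  have hSSexp : Xz^E * (SS * (2*Wv)) = ∑ m ∈ range N, (g m + g m) := by
    rw [hSS, Finset.sum_mul, Finset.mul_sum]
    refine Finset.sum_congr rfl fun m _ => ?_
    rw [hg, pow_add]
    ring
  -- sum split
  have hsum : ∑ k ∈ range (2*N+1), F k =
      (∑ m ∈ range N, F (N-1-m)) + ((∑ m ∈ range N, F (N+m)) + F (N+N)) := by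
    rw [show 2*N+1 = N + (N+1) from by omega, Finset.sum_range_add,
      Finset.sum_range_succ (fun j => F (N+j)) N,
      ← Finset.sum_range_reflect (fun k => F k) N]
  -- the three divisibility obligations
  have obligA : ∀ m ∈ range N, Xz^B ∣ F (N+m) - g m := by
    intro m hm
    have hmN : m < N := Finset.mem_range.mp hm
    obtain ⟨a, ha⟩ : ∃ a, m*(m+1) = a := ⟨_, rfl⟩
    have ham : 2*m ≤ a + 1 := by nlinarith
    -- Q2 split at N+m
    have hq : Q2 = (∏ j ∈ range (N+m), (1 - Xz^(2*(j+1)))) *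
        ∏ j ∈ range (N-m), (1 - Xz^(2*(N+m+j+1))) := by
      rw [hQ2, show 2*N = (N+m) + (N-m) from by omega, Finset.prod_range_add]
    have hkB := keyB (2*N) (N+m) (by omega)
    have hε : (N+m)^2+(N+m)+2*N*(2*N-(N+m)) = E + a := by
      rw [hE, ← ha]
      zify [show N+m ≤ 2*N from by omega]
      ring
    have hFk : F (N+m) = Xz^(E+a) *
        ((∏ j ∈ range (N+m), (1 - Xz^(2*(2*N+j+1-(N+m))))) *
         ((∏ j ∈ range (N-m), (1 - Xz^(2*(N+m+j+1)))) * (1+Xz^(2*N)))) := by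
      rw [hF]
      simp only
      rw [hε, hq]
      linear_combination (Xz^(E+a) * (∏ j ∈ range (N-m), (1 - Xz^(2*(N+m+j+1)))) *
        (1+Xz^(2*N))) * hkB
    by_cases hma : a < N
    · have hBsplit : B = (E + a) + (N - a) := by rw [hB, hE]; omega
      rw [hFk]
      simp only [hg]
      rw [ha, hBsplit, pow_add, ← mul_sub]
      apply mul_dvd_mul_left
      rw [show ∀ A W : PowerSeries ℤ, A - W = (A - 1) - (W - 1) from fun A W => by ring]
      apply dvd_sub
      · apply H2
        · apply H1; intro j hj; exact Hsub (by omega)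
        · apply H2
          · apply H1; intro j hj; exact Hsub (by omega)
          · exact Hadd (by omega)
      · apply H1; intro j hj; exact Hsub (by omega)
    · have hBle : B ≤ E + a := by rw [hB, hE]; omega
      apply dvd_sub
      · rw [hFk]; exact Dvd.dvd.mul_right (pow_dvd_pow _ hBle) _
      · simp only [hg]
        rw [ha]
        exact Dvd.dvd.mul_right (pow_dvd_pow _ hBle) _
  have obligB : ∀ m ∈ range N, Xz^B ∣ F (N-1-m) - g m := by
    intro m hm
    have hmN : m < N := Finset.mem_range.mp hm
    obtain ⟨a, ha⟩ : ∃ a, m*(m+1) = a := ⟨_, rfl⟩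
    have ham : 2*m ≤ a + 1 := by nlinarith
    set k := N-1-m with hk
    have hkm : k + m + 1 = N := by omega
    have hq : Q2 = (∏ j ∈ range k, (1 - Xz^(2*(j+1)))) *
        ∏ j ∈ range (N+1+m), (1 - Xz^(2*(k+j+1))) := by
      rw [hQ2, show 2*N = k + (N+1+m) from by omega, Finset.prod_range_add]
    have hkB := keyB (2*N) k (by omega)
    have hε : k^2+k+2*N*(2*N-k) = E + a := by
      rw [hE, ← ha, ← hkm]
      have h2 : (k+m+1)*(2:ℕ) - k = k + 2*m + 2 := by omega
      zify [show k ≤ 2*(k+m+1) from by omega]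
      ring
    have hFk : F k = Xz^(E+a) *
        ((∏ j ∈ range k, (1 - Xz^(2*(2*N+j+1-k)))) *
         ((∏ j ∈ range (N+1+m), (1 - Xz^(2*(k+j+1)))) * (1+Xz^(2*N)))) := by
      rw [hF]
      simp only
      rw [hε, hq]
      linear_combination (Xz^(E+a) * (∏ j ∈ range (N+1+m), (1 - Xz^(2*(k+j+1)))) *
        (1+Xz^(2*N))) * hkB
    by_cases hma : a < N
    · have hBsplit : B = (E + a) + (N - a) := by rw [hB, hE]; omega
      rw [hFk]
      simp only [hg]
      rw [ha, hBsplit, pow_add, ← mul_sub]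
      apply mul_dvd_mul_left
      rw [show ∀ A W : PowerSeries ℤ, A - W = (A - 1) - (W - 1) from fun A W => by ring]
      apply dvd_sub
      · apply H2
        · apply H1; intro j hj; exact Hsub (by omega)
        · apply H2
          · apply H1
            intro j hj
            have hjk : j < N+1+m := Finset.mem_range.mp hj
            exact Hsub (by omega)
          · exact Hadd (by omega)
      · apply H1; intro j hj; exact Hsub (by omega)
    · have hBle : B ≤ E + a := by rw [hB, hE]; omega
      apply dvd_sub
      · rw [hFk]; exact Dvd.dvd.mul_right (pow_dvd_pow _ hBle) _
      · simp only [hg]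
        rw [ha]
        exact Dvd.dvd.mul_right (pow_dvd_pow _ hBle) _
  have obligC : Xz^B ∣ F (N+N) := by
    have hε : (N+N)^2+(N+N)+2*N*(2*N-(N+N)) = B + N^2 := by
      rw [hB]
      zify [show N+N ≤ 2*N from by omega]
      ring
    rw [hF]
    simp only
    rw [hε]
    exact Dvd.dvd.mul_right (Dvd.dvd.mul_left (pow_dvd_pow _ (Nat.le_add_right _ _)) _) _
  -- assemble the congruence
  have claim : Xz^B ∣ (∑ k ∈ range (2*N+1), F k) - Xz^E * (SS * (2*Wv)) := by
    rw [hsum, hSSexp]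
    have : (∑ m ∈ range N, F (N-1-m)) + ((∑ m ∈ range N, F (N+m)) + F (N+N)) -
        ∑ m ∈ range N, (g m + g m) =
        ((∑ m ∈ range N, (F (N-1-m) - g m)) + (∑ m ∈ range N, (F (N+m) - g m))) + F (N+N) := by
      rw [Finset.sum_sub_distrib, Finset.sum_sub_distrib, Finset.sum_add_distrib]
      ring
    rw [this]
    exact dvd_add (dvd_add (Finset.dvd_sum obligB) (Finset.dvd_sum obligA)) obligC
  rw [← Hmain] at claim
  have claim2 : Xz^E * Xz^N ∣ Xz^E * (((PP*DD) - SS) * (2*Wv)) := by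
    rw [← pow_add]
    have hBE : E + N = B := by rw [hB, hE]; omega
    rw [hBE]
    have : Xz^E * ((PP * DD) * (2*Wv)) - Xz^E * (SS * (2*Wv)) =
        Xz^E * (((PP*DD) - SS) * (2*Wv)) := by ring
    rw [← this]
    exact claim
  have claim3 : Xz^N ∣ ((PP*DD) - SS) * (2*Wv) :=
    (mul_dvd_mul_iff_left (pow_ne_zero E PowerSeries.X_ne_zero)).mp claim2
  have hV : ¬ (Xz ∣ 2*Wv) := by
    rw [PowerSeries.X_dvd_iff]
    simp only [map_mul, map_ofNat, hWv, map_prod, map_sub, map_one, map_pow,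
      PowerSeries.constantCoeff_X]
    intro h
    rw [Finset.prod_congr rfl (fun j _ => by
      rw [zero_pow (by omega : 2*(N+j+1) ≠ 0), sub_zero] : ∀ j ∈ range N, _ = (1:ℤ))] at h
    simp at h
  exact PowerSeries.X_prime.pow_dvd_of_dvd_mul_right N hV claim3


theorem prod_geom_mul_prod_one_add_eq :
    ∀ n : ℕ,
      PowerSeries.coeff n ((∏ k ∈ Finset.range (n + 1), geom (k + 1)) *
        ∏ k ∈ Finset.range (n + 1), (1 + (PowerSeries.X : PowerSeries ℤ) ^ (2 * (k + 1)))) =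
      PowerSeries.coeff n ((∏ k ∈ Finset.range (n + 1), geom (k + 1)) *
        (∏ k ∈ Finset.range (n + 1), geom (4 * (k + 1))) *
        ∑ k ∈ Finset.range (n + 1), (PowerSeries.X : PowerSeries ℤ) ^ (k * (k + 1))) := by
  intro n
  obtain ⟨Er, hEr⟩ := core n
  set G : PowerSeries ℤ := ∏ k ∈ Finset.range (n + 1), geom (k + 1) with hG
  set G4 : PowerSeries ℤ := ∏ k ∈ Finset.range (n + 1), geom (4 * (k + 1)) with hG4
  set P : PowerSeries ℤ := ∏ k ∈ Finset.range (n + 1), (1 + Xz ^ (2 * (k + 1))) with hP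
  set D4 : PowerSeries ℤ := ∏ k ∈ Finset.range (n + 1), (1 - Xz ^ (4 * (k + 1))) with hD4
  set S : PowerSeries ℤ := ∑ k ∈ Finset.range (n + 1), Xz ^ (k * (k + 1)) with hS
  have hunit : G4 * D4 = 1 := by
    rw [hG4, hD4, ← Finset.prod_mul_distrib]
    rw [Finset.prod_congr rfl (fun k _ => ?_), Finset.prod_const_one]
    rw [geom, mul_comm]
    refine PowerSeries.mul_invOfUnit _ 1 ?_
    simp [zero_pow (show 4*(k+1) ≠ 0 by omega)]
  have hPD : P * D4 = S + Xz^(n+1) * Er := by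
    rw [← hEr]; ring
  have key : G * P = G * G4 * S + G * G4 * (Xz^(n+1) * Er) := by
    calc G * P = G * P * (G4 * D4) := by rw [hunit, mul_one]
      _ = G * G4 * (P * D4) := by ring
      _ = G * G4 * (S + Xz^(n+1) * Er) := by rw [hPD]
      _ = G * G4 * S + G * G4 * (Xz^(n+1) * Er) := by ring
  rw [key, map_add]
  have hzero : (PowerSeries.coeff n) (G * G4 * (Xz^(n+1) * Er)) = 0 := by
    have hdvd : Xz^(n+1) ∣ G * G4 * (Xz^(n+1) * Er) :=
      Dvd.dvd.mul_left (Dvd.dvd.mul_right (dvd_refl _) Er) (G * G4)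
    exact PowerSeries.X_pow_dvd_iff.mp hdvd n (Nat.lt_succ_self n)
  rw [hzero, add_zero]
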